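/- Let β₁, β₂ > 0 with β₁, β₂, and the ratio β₁/β₂ such that β₁ and β₂ are ℚ-linearly independent. Then for every real β ≠ 0, sup_{x > 0} x·|sin(β₁ log x) − β sin(β₂ log x)| = ∞. In particular, limsup_{y → ∞} |sin(β₁ y) − β sin(β₂ y)| > 0. -/

import Mathlib

open Real

lemma key_dense (θ : ℝ) (hθ : Irrational θ) :
    Dense ((AddSubgroup.closure {θ, 1} : AddSubgroup ℝ) : Set ℝ) := by
  rcases AddSubgroup.dense_or_cyclic (AddSubgroup.closure {θ, 1}) with h | ⟨a, ha⟩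
  · exact h
  · exfalso
    have hθm : θ ∈ AddSubgroup.closure ({θ, 1} : Set ℝ) :=
      AddSubgroup.subset_closure (by simp)
    have h1m : (1 : ℝ) ∈ AddSubgroup.closure ({θ, 1} : Set ℝ) :=
      AddSubgroup.subset_closure (by simp)
    rw [ha, AddSubgroup.mem_closure_singleton] at hθm h1m
    obtain ⟨n, hn⟩ := hθm
    obtain ⟨k, hk⟩ := h1m
    rw [zsmul_eq_mul] at hn hk
    have hk0 : (k : ℝ) ≠ 0 := by
      intro h; rw [h, zero_mul] at hk; exact one_ne_zero hk.symm
    have hθeq : θ = (n : ℝ) / (k : ℝ) := by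
      have ha0 : a = 1 / (k : ℝ) := by field_simp; linarith [hk]
      rw [← hn, ha0]; field_simp
    exact hθ ⟨(n : ℚ) / (k : ℚ), by push_cast; exact hθeq.symm⟩

lemma key_sin (θ : ℝ) (hθ : Irrational θ) (N : ℤ) (hN : 0 ≤ N) :
    ∃ n : ℤ, N < n ∧ 1 / 2 ≤ |Real.sin (2 * π * n * θ)| := by
  classical
  set F : Finset ℤ := Finset.Icc (-N) N with hF
  set T : Finset ℝ := F.image (fun m : ℤ => (m : ℝ) * θ + (round (1/4 - (m : ℝ) * θ) : ℤ)) with hT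
  have hI : (Set.Ioo (1/8 : ℝ) (3/8)).Infinite := Set.Ioo_infinite (by norm_num)
  obtain ⟨t, htI, htT⟩ := hI.exists_notMem_finset T
  obtain ⟨ht1, ht2⟩ := htI
  have hT_ne : T.Nonempty :=
    Finset.Nonempty.image ⟨0, by simp [hF, hN]⟩ _
  set δ : ℝ := (T.image (fun s => |t - s|)).min' (hT_ne.image _) with hδdef
  have hδ_le : ∀ s ∈ T, δ ≤ |t - s| := fun s hs =>
    Finset.min'_le _ _ (Finset.mem_image_of_mem _ hs)
  have hδ : 0 < δ := by
    obtain ⟨s, hs, hseq⟩ := Finset.mem_image.mp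
      (Finset.min'_mem (T.image (fun s => |t - s|)) (hT_ne.image _))
    rw [hδdef, ← hseq]
    have : t ≠ s := fun h => htT (h ▸ hs)
    exact abs_pos.mpr (sub_ne_zero.mpr this)
  set ε : ℝ := min (min (t - 1/8) (3/8 - t)) δ with hεdef
  have hε : 0 < ε := lt_min (lt_min (by linarith) (by linarith)) hδ
  have hdense := key_dense θ hθ
  have ht_mem : t ∈ closure ((AddSubgroup.closure {θ, 1} : AddSubgroup ℝ) : Set ℝ) := by
    rw [dense_iff_closure_eq] at hdense; rw [hdense]; trivial
  obtain ⟨g, hgS, hgd⟩ := Metric.mem_closure_iff.mp ht_mem ε hε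
  have hgS' : g ∈ AddSubgroup.closure ({θ, 1} : Set ℝ) := hgS
  rw [AddSubgroup.mem_closure_pair] at hgS'
  obtain ⟨m, k, hmk⟩ := hgS' 
  have hg : (m : ℝ) * θ + (k : ℝ) = g := by
    rw [zsmul_eq_mul, zsmul_eq_mul, mul_one] at hmk; exact hmk
  have hdist : |t - g| < ε := by rw [Real.dist_eq] at hgd; exact hgd
  have habs1 : |t - g| < t - 1/8 := lt_of_lt_of_le hdist ((min_le_left _ _).trans (min_le_left _ _))
  have habs2 : |t - g| < 3/8 - t := lt_of_lt_of_le hdist ((min_le_left _ _).trans (min_le_right _ _))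
  have hgI1 : 1/8 < g := by
    have := abs_lt.mp habs1; linarith [this.2]
  have hgI2 : g < 3/8 := by
    have := abs_lt.mp habs2; linarith [this.1]
  have hmN : N < |m| := by
    by_contra hle
    push_neg at hle
    have hmF : m ∈ F := by
      rw [hF, Finset.mem_Icc]
      constructor <;> [linarith [neg_abs_le m]; linarith [le_abs_self m]]
    have hk_round : round (1/4 - (m : ℝ) * θ) = k := by
      have hx : (1/4 - (m : ℝ) * θ) = (k : ℝ) + (1/4 - g) := by rw [← hg]; ring
      rw [hx, round_intCast_add]
      have h0 : round ((1:ℝ)/4 - g) = 0 := by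
        rw [round_eq_zero_iff]
        constructor <;> simp <;> linarith
      rw [h0, add_zero]
    have hgT : g ∈ T := Finset.mem_image.mpr ⟨m, hmF, by rw [hk_round]; exact hg⟩
    have : ε ≤ |t - g| := le_trans (min_le_right _ _) (hδ_le g hgT)
    linarith
  have hm0 : m ≠ 0 := by
    intro h; rw [h] at hmN; simp at hmN; omega
  refine ⟨|m|, hmN, ?_⟩
  have habs : |Real.sin (2 * π * (|m| : ℤ) * θ)| = |Real.sin (2 * π * (m : ℝ) * θ)| := by
    rcases abs_choice m with h | h
    · rw [h]
    · rw [h]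
      push_cast
      rw [show 2 * π * (-(m : ℝ)) * θ = -(2 * π * (m : ℝ) * θ) by ring, Real.sin_neg, abs_neg]
  rw [habs]
  have hsin : Real.sin (2 * π * (m : ℝ) * θ) = Real.sin (2 * π * g) := by
    rw [← hg, show 2 * π * ((m : ℝ) * θ + (k : ℝ)) = 2 * π * (m : ℝ) * θ + (k : ℝ) * (2 * π) by ring,
      Real.sin_add_int_mul_two_pi]
  rw [hsin]
  have h1 : Real.sin (2 * π * g) = Real.cos (π/2 - 2 * π * g) := (Real.cos_pi_div_two_sub _).symm
  have h2 : 1 - (π/2 - 2 * π * g)^2 / 2 ≤ Real.cos (π/2 - 2 * π * g) :=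
    Real.one_sub_sq_div_two_le_cos
  have hπ4 : π ≤ 4 := Real.pi_le_four
  have hπ0 : 0 < π := Real.pi_pos
  have hu1 : π/2 - 2 * π * g < π/4 := by nlinarith [mul_pos hπ0 (show (0:ℝ) < g - 1/8 by linarith)]
  have hu2 : -(π/4) < π/2 - 2 * π * g := by nlinarith [mul_pos hπ0 (show (0:ℝ) < 3/8 - g by linarith)]
  have hb : (π/2 - 2 * π * g)^2 ≤ (π/4)^2 := by
    nlinarith [mul_pos (show (0:ℝ) < π/4 - (π/2 - 2 * π * g) by linarith)
      (show (0:ℝ) < π/4 + (π/2 - 2 * π * g) by linarith)]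
  have hhalf : 1/2 ≤ Real.sin (2 * π * g) := by
    rw [h1]; nlinarith
  calc (1:ℝ)/2 ≤ Real.sin (2 * π * g) := hhalf
    _ ≤ |Real.sin (2 * π * g)| := le_abs_self _

lemma key_aux (β₁ β₂ : ℝ) (h2 : 0 < β₂) (hθ : Irrational (β₁ / β₂)) (β a : ℝ) :
    ∃ y : ℝ, a ≤ y ∧ 1/2 ≤ |Real.sin (β₁ * y) - β * Real.sin (β₂ * y)| := by
  have hπ0 : 0 < π := Real.pi_pos
  set N : ℤ := max ⌈β₂ * a / (2 * π)⌉ 0 with hN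
  obtain ⟨n, hn, hsin⟩ := key_sin (β₁ / β₂) hθ N (le_max_right _ _)
  refine ⟨2 * π * n / β₂, ?_, ?_⟩
  · have h1 : β₂ * a / (2 * π) ≤ (N : ℝ) := le_trans (Int.le_ceil _) (by exact_mod_cast le_max_left _ _)
    have h2' : (N : ℝ) < n := by exact_mod_cast hn
    rw [le_div_iff₀ h2]
    rw [div_le_iff₀ (by positivity : (0:ℝ) < 2 * π)] at h1
    nlinarith [h1, h2', hπ0]
  · have hz : Real.sin (β₂ * (2 * π * n / β₂)) = 0 := by
      rw [show β₂ * (2 * π * n / β₂) = ((2 * n : ℤ) : ℝ) * π by push_cast; field_simp]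
      exact Real.sin_int_mul_pi (2 * n)
    have hb1 : β₁ * (2 * π * n / β₂) = 2 * π * n * (β₁ / β₂) := by field_simp
    rw [hz, mul_zero, sub_zero, hb1]
    exact hsin

theorem stmt3 (β₁ β₂ : ℝ) (h1 : 0 < β₁) (h2 : 0 < β₂)
    (hind : LinearIndependent ℚ ![β₁, β₂]) :
    ∀ β : ℝ, β ≠ 0 →
      (∀ M : ℝ, ∃ x : ℝ, 0 < x ∧
        M < x * |Real.sin (β₁ * Real.log x) - β * Real.sin (β₂ * Real.log x)|) ∧
      0 < Filter.limsup
        (fun y : ℝ => |Real.sin (β₁ * y) - β * Real.sin (β₂ * y)|) Filter.atTop := by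
  have hθ : Irrational (β₁ / β₂) := by
    rintro ⟨q, hq⟩
    have hpair := LinearIndependent.pair_iff.mp hind 1 (-q) ?_
    · exact one_ne_zero hpair.1
    · rw [eq_div_iff (ne_of_gt h2)] at hq
      have : β₁ = (q : ℝ) * β₂ := hq.symm
      rw [Rat.smul_def, Rat.smul_def]
      push_cast
      rw [this]; ring
  intro β hβ
  constructor
  · intro M
    obtain ⟨y, hy, hval⟩ := key_aux β₁ β₂ h2 hθ β (Real.log (2 * |M| + 1))
    refine ⟨Real.exp y, Real.exp_pos y, ?_⟩
    rw [Real.log_exp]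
    have hexp : 2 * |M| + 1 ≤ Real.exp y := by
      calc 2 * |M| + 1 = Real.exp (Real.log (2 * |M| + 1)) := by
            rw [Real.exp_log]; positivity
        _ ≤ Real.exp y := Real.exp_le_exp.mpr hy
    have hMa : M ≤ |M| := le_abs_self M
    nlinarith [Real.exp_pos y]
  · have hfreq : ∃ᶠ y in Filter.atTop, (1:ℝ)/2 ≤ |Real.sin (β₁ * y) - β * Real.sin (β₂ * y)| := by
      rw [Filter.frequently_atTop]
      intro a
      obtain ⟨y, hy, hval⟩ := key_aux β₁ β₂ h2 hθ β a
      exact ⟨y, hy, hval⟩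
    have hbdd : Filter.IsBoundedUnder (· ≤ ·) Filter.atTop
        (fun y : ℝ => |Real.sin (β₁ * y) - β * Real.sin (β₂ * y)|) := by
      refine Filter.isBoundedUnder_of ⟨1 + |β|, fun y => ?_⟩
      calc |Real.sin (β₁ * y) - β * Real.sin (β₂ * y)|
          ≤ |Real.sin (β₁ * y)| + |β * Real.sin (β₂ * y)| := abs_sub _ _
        _ ≤ 1 + |β| := by
            rw [abs_mul]
            have := Real.abs_sin_le_one (β₁ * y)
            have h2' := Real.abs_sin_le_one (β₂ * y)
            nlinarith [abs_nonneg β]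
    have := Filter.le_limsup_of_frequently_le hfreq hbdd
    linarith
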